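/- arXiv:1609.06561 — 4 statements merged into one kernel-verified Lean document; each statement's English description precedes it below -/
import Mathlib

section
/- Let σ1, σ2 > 0, ρ ∈ [−1,1], and let ψ11, ψ22, ψ12 : [0,∞) → ℝ be continuous functions with ψ_{ij}(0) = 1 that are three times continuously differentiable on (0,∞) and satisfy: (i) ψ11''(r) − r·ψ11'''(r) ≥ 0 and ψ22''(r) − r·ψ22'''(r) ≥ 0 for all r > 0; (ii) ψ_{ij}(r) → 0, r·ψ_{ij}'(r) → 0 and r²·ψ_{ij}''(r) → 0 as r → ∞ for all i,j ∈ {1,2}; (iii) the functions r ↦ r·ψ_{ij}''(r) − r²·ψ_{ij}'''(r) are (absolutely) integrable on (0,∞) for all i,j ∈ {1,2}; (iv) ρ²·(ψ12''(r) − r·ψ12'''(r))² ≤ (ψ11''(r) − r·ψ11'''(r))·(ψ22''(r) − r·ψ22'''(r)) for all r > 0. Then the matrix-valued function C : [0,∞) → ℝ^{2×2} with C11(r) = σ1²·ψ11(r), C22(r) = σ2²·ψ22(r), C12(r) = C21(r) = ρσ1σ2·ψ12(r) is positive definite in ℝ³. -/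
open Matrix Set Filter MeasureTheory

noncomputable section

/-- A `2×2`-matrix-valued function `C` on `[0,∞)` is positive definite in `ℝⁿ` if for all
finitely many points `x₁,…,x_p ∈ ℝⁿ` and vectors `a₁,…,a_p ∈ ℝ²`,
`∑_{i,j} aᵢᵀ C(‖xᵢ - xⱼ‖) aⱼ ≥ 0`. -/
def PosDefIn (n : ℕ) (C : ℝ → Matrix (Fin 2) (Fin 2) ℝ) : Prop :=
  ∀ (p : ℕ) (x : Fin p → EuclideanSpace ℝ (Fin n)) (a : Fin p → Fin 2 → ℝ),
    0 ≤ ∑ i : Fin p, ∑ j : Fin p, a i ⬝ᵥ (C ‖x i - x j‖).mulVec (a j)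

/-! ### Auxiliary development: spherical covariance kernel and its properties -/

section Aux

open Metric Real

def sphK (r t : ℝ) : ℝ := if r < t then (1 - r/t)^2 * (1 + r/(2*t)) else 0

lemma sphK_nonneg {r : ℝ} (hr : 0 ≤ r) (t : ℝ) : 0 ≤ sphK r t := by
  unfold sphK
  split_ifs with h
  · have ht : 0 < t := lt_of_le_of_lt hr h
    have : 0 ≤ 1 + r/(2*t) := by positivity
    positivity
  · exact le_refl _

lemma sphK_le_one {r : ℝ} (hr : 0 ≤ r) (t : ℝ) : sphK r t ≤ 1 := by
  unfold sphK
  split_ifs with h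
  · have ht : 0 < t := lt_of_le_of_lt hr h
    have hu : r/t < 1 := (div_lt_one ht).2 h
    have hu0 : 0 ≤ r/t := by positivity
    have h2 : r/(2*t) = (r/t)/2 := by ring
    rw [h2]
    nlinarith [sq_nonneg (r/t)]
  · norm_num

lemma measurable_sphK (r : ℝ) : Measurable (fun t => sphK r t) := by
  unfold sphK
  exact Measurable.ite measurableSet_Ioi
    (((measurable_const.sub (measurable_const.div measurable_id)).pow measurable_const).mul
      (measurable_const.add (measurable_const.div (measurable_id.const_mul 2)))) measurable_const

lemma volume_disc (c : ℝ) :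
    volume {y : Fin 2 → ℝ | y 0 ^ 2 + y 1 ^ 2 ≤ c} = ENNReal.ofReal (π * c) := by
  rcases lt_or_ge c 0 with hc | hc
  · have : {y : Fin 2 → ℝ | y 0 ^ 2 + y 1 ^ 2 ≤ c} = ∅ := by
      ext y; simp only [mem_setOf_eq, mem_empty_iff_false, iff_false]
      push_neg
      nlinarith [sq_nonneg (y 0), sq_nonneg (y 1)]
    rw [this, measure_empty, eq_comm, ENNReal.ofReal_eq_zero]
    nlinarith [pi_pos]
  · have hpre : (MeasurableEquiv.toLp 2 (Fin 2 → ℝ)).symm ⁻¹' {y : Fin 2 → ℝ | y 0 ^ 2 + y 1 ^ 2 ≤ c}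
        = closedBall (0 : EuclideanSpace ℝ (Fin 2)) (Real.sqrt c) := by
      ext z
      simp only [mem_preimage, mem_setOf_eq, mem_closedBall, dist_zero_right,
        MeasurableEquiv.coe_toLp_symm,
        EuclideanSpace.norm_eq]
      rw [Fin.sum_univ_two]
      rw [show ‖z 0‖ ^ 2 = z 0 ^ 2 by rw [Real.norm_eq_abs, sq_abs],
        show ‖z 1‖ ^ 2 = z 1 ^ 2 by rw [Real.norm_eq_abs, sq_abs],
        Real.sqrt_le_sqrt_iff hc]
    have hm : MeasurableSet {y : Fin 2 → ℝ | y 0 ^ 2 + y 1 ^ 2 ≤ c} := by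
      apply measurableSet_le
      · exact ((measurable_pi_apply 0).pow measurable_const).add
          ((measurable_pi_apply 1).pow measurable_const)
      · exact measurable_const
    rw [← (EuclideanSpace.volume_preserving_symm_measurableEquiv_toLp (Fin 2)).measure_preimage
      hm.nullMeasurableSet, hpre, EuclideanSpace.volume_closedBall]
    simp only [Fintype.card_fin]
    rw [show ((2:ℕ)/2 + 1 : ℝ) = 2 by norm_num, Real.Gamma_two]
    rw [div_one, Real.sq_sqrt pi_nonneg, ← ENNReal.ofReal_pow (Real.sqrt_nonneg c),
      Real.sq_sqrt hc, ← ENNReal.ofReal_mul hc, mul_comm]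

-- the slice-area function
lemma contg (R d : ℝ) : Continuous (fun s : ℝ => max 0 (π * (R^2 - max (s^2) ((s-d)^2)))) := by
  apply continuous_const.max
  exact continuous_const.mul (continuous_const.sub ((continuous_pow 2).max
    (((continuous_id.sub continuous_const).pow 2))))

lemma Jval (R d : ℝ) (hR : 0 < R) (hd : 0 ≤ d) :
    ∫ s : ℝ, max 0 (π * (R^2 - max (s^2) ((s-d)^2))) = (4/3)*π*R^3 * sphK d (2*R) := by
  rcases le_or_gt (2*R) d with hcase | hcase
  · have hz : ∀ s : ℝ, max 0 (π * (R^2 - max (s^2) ((s-d)^2))) = 0 := by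
      intro s
      rcases le_total s (d/2) with hs | hs
      · have h1 : R^2 ≤ (s-d)^2 := by nlinarith
        have : π * (R^2 - max (s^2) ((s-d)^2)) ≤ 0 := by
          have := le_max_right (s^2) ((s-d)^2)
          nlinarith [pi_pos]
        exact max_eq_left this
      · have h1 : R^2 ≤ s^2 := by nlinarith
        have : π * (R^2 - max (s^2) ((s-d)^2)) ≤ 0 := by
          have := le_max_left (s^2) ((s-d)^2)
          nlinarith [pi_pos]
        exact max_eq_left this
    have hK : sphK d (2*R) = 0 := if_neg (not_lt.2 hcase)
    simp only [hz, hK, integral_zero, mul_zero]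
  · -- d < 2R
    have h1 : d - R ≤ d/2 := by linarith
    have h2 : d/2 ≤ R := by linarith
    have hvan : ∀ s ∉ Icc (d-R) R, max 0 (π * (R^2 - max (s^2) ((s-d)^2))) = 0 := by
      intro s hs
      simp only [mem_Icc, not_and_or, not_le] at hs
      rcases hs with hs | hs
      · have : R^2 < (s-d)^2 := by nlinarith
        have hle : π * (R^2 - max (s^2) ((s-d)^2)) ≤ 0 := by
          have := le_max_right (s^2) ((s-d)^2); nlinarith [pi_pos]
        exact max_eq_left hle
      · have : R^2 < s^2 := by nlinarith
        have hle : π * (R^2 - max (s^2) ((s-d)^2)) ≤ 0 := by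
          have := le_max_left (s^2) ((s-d)^2); nlinarith [pi_pos]
        exact max_eq_left hle
    rw [← setIntegral_eq_integral_of_forall_compl_eq_zero hvan,
      integral_Icc_eq_integral_Ioc, ← intervalIntegral.integral_of_le (by linarith : d - R ≤ R),
      ← intervalIntegral.integral_add_adjacent_intervals (a := d-R) (b := d/2) (c := R)
        ((contg R d).intervalIntegrable _ _) ((contg R d).intervalIntegrable _ _)]
    have e1 : ∫ s in (d-R)..(d/2), max 0 (π * (R^2 - max (s^2) ((s-d)^2)))
        = ∫ s in (d-R)..(d/2), π * (R^2 - (s-d)^2) := by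
      apply intervalIntegral.integral_congr
      intro s hs
      rw [uIcc_of_le h1, mem_Icc] at hs
      have hmax : max (s^2) ((s-d)^2) = (s-d)^2 := max_eq_right (by nlinarith [hs.1, hs.2])
      have hpos : 0 ≤ π * (R^2 - (s-d)^2) := by
        have : (s-d)^2 ≤ R^2 := by nlinarith [hs.1, hs.2]
        have := pi_pos; nlinarith
      simp only [hmax, max_eq_right hpos]
    have e2 : ∫ s in (d/2)..R, max 0 (π * (R^2 - max (s^2) ((s-d)^2)))
        = ∫ s in (d/2)..R, π * (R^2 - s^2) := by
      apply intervalIntegral.integral_congr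
      intro s hs
      rw [uIcc_of_le h2, mem_Icc] at hs
      have hmax : max (s^2) ((s-d)^2) = s^2 := max_eq_left (by nlinarith [hs.1, hs.2])
      have hpos : 0 ≤ π * (R^2 - s^2) := by
        have : s^2 ≤ R^2 := by nlinarith [hs.1, hs.2]
        have := pi_pos; nlinarith
      simp only [hmax, max_eq_right hpos]
    have v1 := intervalIntegral.integral_eq_sub_of_hasDerivAt (a := d-R) (b := d/2)
      (f := fun s : ℝ => π*(R^2*s - (s-d)^3/3)) (f' := fun s : ℝ => π*(R^2 - (s-d)^2))
      (fun s _ => by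
        have hs : HasDerivAt (fun s : ℝ => s - d) 1 s := (hasDerivAt_id s).sub_const d
        have h3 : HasDerivAt (fun s : ℝ => (s-d)^3) (3*(s-d)^2*1) s := by
          simpa using hs.fun_pow 3
        have hid : HasDerivAt (fun s : ℝ => R^2*s) (R^2) s := by
          simpa using (hasDerivAt_id s).const_mul (R^2)
        have h := (hid.sub (h3.div_const 3)).const_mul π
        refine h.congr_deriv ?_; ring)
      ((continuous_const.mul (continuous_const.sub
          ((continuous_id.sub continuous_const).pow 2))).intervalIntegrable _ _)
    have v2 := intervalIntegral.integral_eq_sub_of_hasDerivAt (a := d/2) (b := R)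
      (f := fun s : ℝ => π*(R^2*s - s^3/3)) (f' := fun s : ℝ => π*(R^2 - s^2))
      (fun s _ => by
        have hid : HasDerivAt (fun s : ℝ => R^2*s) (R^2) s := by
          simpa using (hasDerivAt_id s).const_mul (R^2)
        have h3 : HasDerivAt (fun s : ℝ => s^3) (3*s^2*1) s := by
          simpa using (hasDerivAt_id s).fun_pow 3
        have h := (hid.sub (h3.div_const 3)).const_mul π
        refine h.congr_deriv ?_; ring)
      ((continuous_const.mul (continuous_const.sub
          (continuous_pow 2))).intervalIntegrable _ _)
    rw [e1, e2, v1, v2, sphK, if_pos hcase]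
    have hR' : (2*R) ≠ 0 := by positivity
    field_simp
    ring

abbrev E3 := EuclideanSpace ℝ (Fin 3)

lemma volume_slab (R d : ℝ) (hR : 0 < R) (hd : 0 ≤ d) :
    volume (closedBall (0:E3) R ∩ closedBall (d • (EuclideanSpace.single 0 1 : E3)) R)
      = ENNReal.ofReal ((4/3)*π*R^3 * sphK d (2*R)) := by
  set A : Set (Fin 3 → ℝ) :=
    {z | z 0^2 + z 1^2 + z 2^2 ≤ R^2 ∧ (z 0 - d)^2 + z 1^2 + z 2^2 ≤ R^2} with hAdef
  have hA : MeasurableSet A := by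
    rw [hAdef, setOf_and]
    exact (measurableSet_le (by fun_prop) measurable_const).inter
      (measurableSet_le (by fun_prop) measurable_const)
  have hpre : (MeasurableEquiv.toLp 2 (Fin 3 → ℝ)).symm ⁻¹' A
      = closedBall (0:E3) R ∩ closedBall (d • (EuclideanSpace.single 0 1 : E3)) R := by
    ext z
    have hz : ∀ w : E3, ‖w‖ ≤ R ↔ w 0^2 + w 1^2 + w 2^2 ≤ R^2 := by
      intro w
      rw [EuclideanSpace.norm_eq, Real.sqrt_le_iff, Fin.sum_univ_three]
      simp [Real.norm_eq_abs, sq_abs, hR.le]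
    simp only [mem_preimage, mem_inter_iff, mem_closedBall, dist_eq_norm, sub_zero]
    rw [hz, hz]
    have c0 : (z - d • (EuclideanSpace.single 0 1 : E3)) 0 = z 0 - d := by
      simp [EuclideanSpace.single_apply]
    have c1 : (z - d • (EuclideanSpace.single 0 1 : E3)) 1 = z 1 := by
      simp [EuclideanSpace.single_apply]
    have c2 : (z - d • (EuclideanSpace.single 0 1 : E3)) 2 = z 2 := by
      simp [EuclideanSpace.single_apply]
    rw [c0, c1, c2]
    simp only [hAdef, mem_setOf_eq]
    rfl
  rw [← hpre, (EuclideanSpace.volume_preserving_symm_measurableEquiv_toLp (Fin 3)).measure_preimage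
    hA.nullMeasurableSet]
  set B : Set (ℝ × (Fin 2 → ℝ)) :=
    {q | q.1^2 + q.2 0^2 + q.2 1^2 ≤ R^2 ∧ (q.1 - d)^2 + q.2 0^2 + q.2 1^2 ≤ R^2} with hBdef
  have hB : MeasurableSet B := by
    rw [hBdef, setOf_and]
    exact (measurableSet_le (by fun_prop) measurable_const).inter
      (measurableSet_le (by fun_prop) measurable_const)
  have hTB : (MeasurableEquiv.piFinSuccAbove (fun _ : Fin 3 => ℝ) 0) ⁻¹' B = A := by
    ext z
    simp only [mem_preimage, MeasurableEquiv.piFinSuccAbove_apply, hBdef, hAdef, mem_setOf_eq,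
      Fin.insertNthEquiv_symm_apply, Fin.removeNth, Fin.zero_succAbove, Fin.succ_zero_eq_one,
      Fin.succ_one_eq_two]
  rw [← hTB, (MeasureTheory.volume_preserving_piFinSuccAbove (fun _ : Fin 3 => ℝ) 0).measure_preimage
    hB.nullMeasurableSet, Measure.volume_eq_prod, Measure.prod_apply hB]
  have hslice : ∀ s : ℝ, (Prod.mk s ⁻¹' B)
      = {y : Fin 2 → ℝ | y 0^2 + y 1^2 ≤ R^2 - max (s^2) ((s-d)^2)} := by
    intro s
    ext y
    simp only [mem_preimage, hBdef, mem_setOf_eq]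
    constructor
    · rintro ⟨ha, hb⟩
      rcases le_total (s^2) ((s-d)^2) with h | h
      · rw [max_eq_right h]; linarith
      · rw [max_eq_left h]; linarith
    · intro h
      have h1 := le_max_left (s^2) ((s-d)^2)
      have h2 := le_max_right (s^2) ((s-d)^2)
      constructor <;> linarith
  have hof : ∀ x : ℝ, ENNReal.ofReal (max 0 x) = ENNReal.ofReal x := by
    intro x
    rcases le_total x 0 with h | h
    · rw [max_eq_left h, ENNReal.ofReal_eq_zero.2 h, ENNReal.ofReal_zero]
    · rw [max_eq_right h]
  calc ∫⁻ s, volume (Prod.mk s ⁻¹' B)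
      = ∫⁻ s, ENNReal.ofReal (max 0 (π * (R^2 - max (s^2) ((s-d)^2)))) := by
        apply lintegral_congr
        intro s
        rw [hslice s, volume_disc, hof]
    _ = ENNReal.ofReal (∫ s : ℝ, max 0 (π * (R^2 - max (s^2) ((s-d)^2)))) := by
        rw [← MeasureTheory.ofReal_integral_eq_lintegral_ofReal]
        · apply Continuous.integrable_of_hasCompactSupport (contg R d)
          apply HasCompactSupport.intro (isCompact_Icc (a := -R) (b := R))
          intro s hs
          simp only [mem_Icc, not_and_or, not_le] at hs
          have hs2 : R^2 < s^2 := by rcases hs with h | h <;> nlinarith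
          have h1 := le_max_left (s^2) ((s-d)^2)
          have : π * (R^2 - max (s^2) ((s-d)^2)) ≤ 0 := by nlinarith [pi_pos]
          exact max_eq_left this
        · exact ae_of_all _ fun s => le_max_left _ _
    _ = ENNReal.ofReal ((4/3)*π*R^3 * sphK d (2*R)) := by rw [Jval R d hR hd]

lemma volume_inter (R : ℝ) (hR : 0 < R) (x y : E3) :
    volume (closedBall x R ∩ closedBall y R)
      = ENNReal.ofReal ((4/3)*π*R^3 * sphK ‖x - y‖ (2*R)) := by
  have htrans : closedBall x R ∩ closedBall y R
      = (fun z : E3 => z + (-x)) ⁻¹' (closedBall 0 R ∩ closedBall (y - x) R) := by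
    ext z
    simp only [mem_inter_iff, mem_preimage, mem_closedBall, dist_eq_norm]
    constructor
    · rintro ⟨h1, h2⟩
      constructor
      · simpa [sub_eq_add_neg] using h1
      · have : z + -x - (y - x) = z - y := by abel
        rw [this]; exact h2
    · rintro ⟨h1, h2⟩
      constructor
      · simpa [sub_eq_add_neg] using h1
      · have : z + -x - (y - x) = z - y := by abel
        rw [this] at h2; exact h2
  rw [htrans, measure_preimage_add_right]
  set v := y - x with hv
  have hnxy : ‖x - y‖ = ‖v‖ := by rw [hv, norm_sub_rev]
  rw [hnxy]
  set d := ‖v‖ with hd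
  have hd0 : 0 ≤ d := norm_nonneg v
  rcases eq_or_ne v 0 with hv0 | hv0
  · have hd' : d = 0 := by rw [hd, hv0, norm_zero]
    have hs := volume_slab R 0 hR le_rfl
    rw [zero_smul] at hs
    rw [hv0, hd', hs]
  · have hE0 : ‖(EuclideanSpace.single 0 1 : E3)‖ = 1 := by
      simp [EuclideanSpace.norm_single]
    have hnorm : ‖v‖ = ‖d • (EuclideanSpace.single 0 1 : E3)‖ := by
      rw [norm_smul, hE0, mul_one, Real.norm_eq_abs, abs_of_nonneg hd0]
    set e := Submodule.reflection (ℝ ∙ (v - d • (EuclideanSpace.single 0 1 : E3)))ᗮ with he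
    have hev : e v = d • (EuclideanSpace.single 0 1 : E3) := Submodule.reflection_sub hnorm
    have hpre : e ⁻¹' (closedBall (0:E3) R ∩ closedBall (d • (EuclideanSpace.single 0 1 : E3)) R)
        = closedBall (0:E3) R ∩ closedBall v R := by
      ext z
      simp only [mem_preimage, mem_inter_iff, mem_closedBall]
      rw [show dist (e z) 0 = dist z 0 by
            rw [dist_zero_right, dist_zero_right, e.norm_map],
          show dist (e z) (d • (EuclideanSpace.single 0 1 : E3)) = dist z v by
            rw [← hev]; exact e.dist_map z v]
    rw [← hpre, e.measurePreserving.measure_preimage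
      ((measurableSet_closedBall.inter measurableSet_closedBall).nullMeasurableSet),
      volume_slab R d hR hd0]

lemma sphK_posdef (t : ℝ) (ht : 0 < t) {p : ℕ} (x : Fin p → E3) (b : Fin p → ℝ) :
    0 ≤ ∑ i : Fin p, ∑ j : Fin p, b i * b j * sphK ‖x i - x j‖ t := by
  set R := t/2 with hRdef
  have hR : 0 < R := by positivity
  have h2R : 2*R = t := by rw [hRdef]; ring
  set V := (4/3)*π*R^3 with hVdef
  have hV : 0 < V := by positivity
  set g : Fin p → E3 → ℝ := fun i => (closedBall (x i) R).indicator 1 with hgdef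
  have hprod : ∀ i j, (fun z => g i z * g j z)
      = (closedBall (x i) R ∩ closedBall (x j) R).indicator 1 := by
    intro i j
    funext z
    rw [hgdef]
    simp only
    rw [← Set.inter_indicator_mul]
    congr 1
    funext w
    simp
  have hgij : ∀ i j, Integrable (fun z => g i z * g j z) := by
    intro i j
    rw [hprod i j]
    rw [integrable_indicator_iff (measurableSet_closedBall.inter measurableSet_closedBall)]
    exact integrableOn_const (lt_of_le_of_lt (measure_mono inter_subset_left) measure_closedBall_lt_top).ne
  have hkey : ∀ i j, ∫ z, g i z * g j z = V * sphK ‖x i - x j‖ t := by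
    intro i j
    rw [hprod i j, integral_indicator_one (measurableSet_closedBall.inter measurableSet_closedBall),
      measureReal_def, volume_inter R hR (x i) (x j), h2R, ENNReal.toReal_ofReal]
    exact mul_nonneg hV.le (sphK_nonneg (norm_nonneg _) t)
  have h0 : 0 ≤ ∫ z, (∑ i, b i * g i z)^2 := integral_nonneg fun z => sq_nonneg _
  have hexp : (fun z => (∑ i, b i * g i z)^2)
      = fun z => ∑ i, ∑ j, (b i * b j) * (g i z * g j z) := by
    funext z
    rw [sq, Finset.sum_mul_sum]
    refine Finset.sum_congr rfl fun i _ => Finset.sum_congr rfl fun j _ => by ring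
  rw [hexp] at h0
  rw [integral_finset_sum _ (fun i _ => integrable_finset_sum _
    (fun j _ => (hgij i j).const_mul _))] at h0
  have h0' : 0 ≤ ∑ i, ∑ j, (b i * b j) * (V * sphK ‖x i - x j‖ t) := by
    refine le_trans h0 (le_of_eq ?_)
    refine Finset.sum_congr rfl fun i _ => ?_
    rw [integral_finset_sum _ (fun j _ => (hgij i j).const_mul _)]
    refine Finset.sum_congr rfl fun j _ => ?_
    rw [MeasureTheory.integral_const_mul, hkey i j]
  have : ∑ i : Fin p, ∑ j : Fin p, b i * b j * sphK ‖x i - x j‖ t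
      = (∑ i, ∑ j, (b i * b j) * (V * sphK ‖x i - x j‖ t)) / V := by
    rw [Finset.sum_div]
    refine Finset.sum_congr rfl fun i _ => ?_
    rw [Finset.sum_div]
    refine Finset.sum_congr rfl fun j _ => ?_
    field_simp
  rw [this]
  exact div_nonneg h0' hV.le

section Repr

variable (f : ℝ → ℝ)

/-- the weight function -/
def wgt (f : ℝ → ℝ) (t : ℝ) : ℝ :=
  (t * deriv (deriv f) t - t^2 * deriv (deriv (deriv f)) t)/3

lemma measurable_wgt : Measurable (wgt f) := by
  unfold wgt
  exact ((measurable_id.mul (measurable_deriv _)).sub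
    ((measurable_id.pow measurable_const).mul (measurable_deriv _))).div_const 3

lemma wgt_integrableOn
    (hint : IntegrableOn (fun t => t * deriv (deriv f) t - t ^ 2 * deriv (deriv (deriv f)) t)
      (Ioi 0)) : IntegrableOn (wgt f) (Ioi 0) := by
  unfold wgt
  exact hint.div_const 3

lemma wgt_sphK_integrableOn
    (hint : IntegrableOn (fun t => t * deriv (deriv f) t - t ^ 2 * deriv (deriv (deriv f)) t)
      (Ioi 0)) {r a : ℝ} (hr : 0 ≤ r) (ha : 0 ≤ a) :
    IntegrableOn (fun t => wgt f t * sphK r t) (Ioi a) := by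
  have hw : IntegrableOn (wgt f) (Ioi a) :=
    (wgt_integrableOn f hint).mono_set (Ioi_subset_Ioi ha)
  refine Integrable.mono hw.norm
    (((measurable_wgt f).mul (measurable_sphK r)).aestronglyMeasurable) ?_
  refine ae_of_all _ fun t => ?_
  rw [norm_mul, norm_norm]
  calc ‖wgt f t‖ * ‖sphK r t‖ ≤ ‖wgt f t‖ * 1 := by
        apply mul_le_mul_of_nonneg_left _ (norm_nonneg _)
        rw [Real.norm_eq_abs, abs_le]
        constructor
        · linarith [sphK_nonneg hr t]
        · exact sphK_le_one hr t
    _ = ‖wgt f t‖ := mul_one _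

lemma repr_pos
    (hC : ContDiffOn ℝ 3 f (Ioi 0))
    (hlim : Tendsto f atTop (nhds 0))
    (hlim' : Tendsto (fun t => t * deriv f t) atTop (nhds 0))
    (hlim'' : Tendsto (fun t => t ^ 2 * deriv (deriv f) t) atTop (nhds 0))
    (hint : IntegrableOn (fun t => t * deriv (deriv f) t - t ^ 2 * deriv (deriv (deriv f)) t)
      (Ioi 0))
    {r : ℝ} (hr : 0 < r) :
    f r = ∫ t in Ioi (0:ℝ), wgt f t * sphK r t := by
  set f1 := deriv f with hf1def
  set f2 := deriv (deriv f) with hf2def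
  set f3 := deriv (deriv (deriv f)) with hf3def
  -- differentiability facts on Ioi 0
  have hop : IsOpen (Ioi (0:ℝ)) := isOpen_Ioi
  have hCd : ContDiffOn ℝ 2 f1 (Ioi 0) := by
    rw [hf1def]
    exact hC.deriv_of_isOpen hop (by norm_num)
  have hCdd : ContDiffOn ℝ 1 f2 (Ioi 0) := by
    rw [hf2def]
    exact hCd.deriv_of_isOpen hop (by norm_num)
  have hdf : ∀ t ∈ Ioi (0:ℝ), HasDerivAt f (f1 t) t := fun t ht =>
    ((hC.differentiableOn (by norm_num)).differentiableAt (hop.mem_nhds ht)).hasDerivAt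
  have hdf1 : ∀ t ∈ Ioi (0:ℝ), HasDerivAt f1 (f2 t) t := fun t ht =>
    ((hCd.differentiableOn (by norm_num)).differentiableAt (hop.mem_nhds ht)).hasDerivAt
  have hdf2 : ∀ t ∈ Ioi (0:ℝ), HasDerivAt f2 (f3 t) t := fun t ht =>
    ((hCdd.differentiableOn (by norm_num)).differentiableAt (hop.mem_nhds ht)).hasDerivAt
  -- the antiderivative
  set H : ℝ → ℝ := fun t => -f t + (t - r) * f1 t - (t^2/3 - r*t/2 + r^3/(6*t)) * f2 t with hHdef
  have hderH : ∀ t ∈ Ioi r, HasDerivAt H (wgt f t * sphK r t) t := by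
    intro t ht
    have ht0 : (0:ℝ) < t := lt_trans hr ht
    have htne : t ≠ 0 := ne_of_gt ht0
    have h1 := hdf t ht0
    have h2 := hdf1 t ht0
    have h3 := hdf2 t ht0
    have hq : HasDerivAt (fun u : ℝ => u^2/3 - r*u/2 + r^3/(6*u))
        (2*t/3 - r/2 - r^3/(6*t^2)) t := by
      have ha : HasDerivAt (fun u : ℝ => u^2/3) (2*t/3) t := by
        simpa using (hasDerivAt_pow 2 t).div_const 3
      have hb : HasDerivAt (fun u : ℝ => r*u/2) (r/2) t := by
        simpa using ((hasDerivAt_id t).const_mul r).div_const 2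
      have hc : HasDerivAt (fun u : ℝ => r^3/(6*u)) (-(r^3/6)*(t^2)⁻¹) t := by
        have : HasDerivAt (fun u : ℝ => u⁻¹) (-(t^2)⁻¹) t := hasDerivAt_inv htne
        have h' := this.const_mul (r^3/6)
        have heq : (fun u : ℝ => (r^3/6) * u⁻¹) = fun u : ℝ => r^3/(6*u) := by
          funext u; rw [mul_comm 6 u]; rw [div_mul_eq_div_div]; ring
        rw [heq] at h'
        refine h'.congr_deriv ?_; ring
      have := (ha.sub hb).add hc
      refine this.congr_deriv ?_; ring
    have hlin : HasDerivAt (fun u : ℝ => u - r) 1 t := (hasDerivAt_id t).sub_const r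
    have hmain := ((h1.neg).add (hlin.mul h2)).sub (hq.mul h3)
    refine hmain.congr_deriv ?_
    rw [show sphK r t = (1 - r/t)^2 * (1 + r/(2*t)) from if_pos (mem_Ioi.mp ht)]
    unfold wgt
    rw [← hf2def, ← hf3def]
    field_simp
    ring
  have hcontH : ContinuousWithinAt H (Ici r) r := by
    have hcH : ContinuousOn H (Ioi 0) := by
      apply ContinuousOn.sub
      · apply ContinuousOn.add
        · exact (hC.continuousOn.neg)
        · exact (continuousOn_id.sub continuousOn_const).mul hCd.continuousOn
      · apply ContinuousOn.mul _ hCdd.continuousOn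
        apply ContinuousOn.add
        · exact (continuousOn_pow 2).div_const 3 |>.sub
            ((continuousOn_const.mul continuousOn_id).div_const 2)
        · exact continuousOn_const.div (continuousOn_const.mul continuousOn_id)
            (fun t ht => by simp only [mem_Ioi] at ht; positivity)
    exact ((hcH.continuousAt (hop.mem_nhds hr)).continuousWithinAt)
  -- limits of components at infinity
  have l1 : Tendsto f1 atTop (nhds 0) := by
    have h := hlim'.mul tendsto_inv_atTop_zero
    rw [mul_zero] at h
    refine h.congr' ?_
    filter_upwards [eventually_ge_atTop (1:ℝ)] with t ht
    have : t ≠ 0 := by linarith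
    field_simp
  have l2 : Tendsto (fun t => t * f2 t) atTop (nhds 0) := by
    have h := hlim''.mul tendsto_inv_atTop_zero
    rw [mul_zero] at h
    refine h.congr' ?_
    filter_upwards [eventually_ge_atTop (1:ℝ)] with t ht
    have : t ≠ 0 := by linarith
    field_simp
  have l3 : Tendsto (fun t => f2 t / t) atTop (nhds 0) := by
    have hp : Tendsto (fun t : ℝ => (t⁻¹)^3) atTop (nhds 0) := by
      have := tendsto_inv_atTop_zero.pow 3 (α := ℝ)
      simpa using this
    have h := hlim''.mul hp
    rw [mul_zero] at h
    refine h.congr' ?_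
    filter_upwards [eventually_ge_atTop (1:ℝ)] with t ht
    have : t ≠ 0 := by linarith
    field_simp
  have hlimH : Tendsto H atTop (nhds 0) := by
    have hcomb : Tendsto (fun t => -(f t) + ((t*f1 t) - r*(f1 t))
        - ((t^2*f2 t)/3 - (r/2)*(t*f2 t) + (r^3/6)*(f2 t/t))) atTop
        (nhds (-(0:ℝ) + (0 - r*0) - (0/3 - (r/2)*0 + (r^3/6)*0))) :=
      ((hlim.neg).add (hlim'.sub (l1.const_mul r))).sub
        (((hlim''.div_const 3).sub (l2.const_mul (r/2))).add (l3.const_mul (r^3/6)))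
    norm_num at hcomb
    refine hcomb.congr' ?_
    filter_upwards [eventually_ge_atTop (1:ℝ)] with t ht
    have htne : t ≠ 0 := by linarith
    rw [hHdef]
    field_simp
  have hintr : IntegrableOn (fun t => wgt f t * sphK r t) (Ioi r) :=
    wgt_sphK_integrableOn f hint hr.le hr.le
  have hFTC := integral_Ioi_of_hasDerivAt_of_tendsto hcontH hderH hintr hlimH
  have hHr : H r = -f r := by
    rw [hHdef]
    have : r ≠ 0 := ne_of_gt hr
    field_simp
    ring
  rw [hHr] at hFTC
  -- extend integral from Ioi r to Ioi 0
  have hsplit : ∫ t in Ioi (0:ℝ), wgt f t * sphK r t = ∫ t in Ioi r, wgt f t * sphK r t := by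
    have hunion : Ioc (0:ℝ) r ∪ Ioi r = Ioi 0 := Ioc_union_Ioi_eq_Ioi hr.le
    have hzero : ∀ t ∈ Ioc (0:ℝ) r, wgt f t * sphK r t = 0 := by
      intro t ht
      have : ¬ (r < t) := not_lt.2 ht.2
      rw [sphK, if_neg this, mul_zero]
    have hi1 : IntegrableOn (fun t => wgt f t * sphK r t) (Ioc 0 r) := by
      exact IntegrableOn.congr_fun integrableOn_zero
        (fun t ht => (hzero t ht).symm) measurableSet_Ioc
    rw [← hunion, setIntegral_union (Ioc_disjoint_Ioi le_rfl) measurableSet_Ioi hi1 hintr,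
      setIntegral_eq_zero_of_forall_eq_zero hzero, zero_add]
  rw [hsplit, hFTC]
  ring

lemma repr_all
    (hcont : ContinuousOn f (Ici 0))
    (hC : ContDiffOn ℝ 3 f (Ioi 0))
    (hlim : Tendsto f atTop (nhds 0))
    (hlim' : Tendsto (fun t => t * deriv f t) atTop (nhds 0))
    (hlim'' : Tendsto (fun t => t ^ 2 * deriv (deriv f) t) atTop (nhds 0))
    (hint : IntegrableOn (fun t => t * deriv (deriv f) t - t ^ 2 * deriv (deriv (deriv f)) t)
      (Ioi 0))
    {r : ℝ} (hr : 0 ≤ r) :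
    f r = ∫ t in Ioi (0:ℝ), wgt f t * sphK r t := by
  rcases hr.lt_or_eq with hr' | hr'
  · exact repr_pos f hC hlim hlim' hlim'' hint hr'
  · subst hr'
    -- limit argument as r → 0⁺
    set F : ℝ → ℝ := fun s => ∫ t in Ioi (0:ℝ), wgt f t * sphK s t with hFdef
    have hFf : ∀ s ∈ Ioi (0:ℝ), F s = f s := fun s hs =>
      (repr_pos f hC hlim hlim' hlim'' hint hs).symm
    have hF0 : Tendsto F (nhdsWithin 0 (Ioi 0)) (nhds (∫ t in Ioi (0:ℝ), wgt f t * sphK 0 t)) := by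
      rw [hFdef]
      apply MeasureTheory.tendsto_integral_filter_of_dominated_convergence
        (bound := fun t => ‖wgt f t‖)
      · filter_upwards [self_mem_nhdsWithin] with s _
        exact ((measurable_wgt f).mul (measurable_sphK s)).aestronglyMeasurable
      · filter_upwards [self_mem_nhdsWithin] with s hs
        refine ae_of_all _ fun t => ?_
        have hs0 : (0:ℝ) ≤ s := (mem_Ioi.mp hs).le
        rw [norm_mul]
        calc ‖wgt f t‖ * ‖sphK s t‖ ≤ ‖wgt f t‖ * 1 := by
              apply mul_le_mul_of_nonneg_left _ (norm_nonneg _)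
              rw [Real.norm_eq_abs, abs_le]
              exact ⟨by linarith [sphK_nonneg hs0 t], sphK_le_one hs0 t⟩
          _ = ‖wgt f t‖ := mul_one _
      · exact (wgt_integrableOn f hint).norm
      · rw [ae_restrict_iff' measurableSet_Ioi]
        refine ae_of_all _ fun t ht => ?_
        have ht0 : (0:ℝ) < t := mem_Ioi.mp ht
        apply Tendsto.const_mul
        have hpoly : Tendsto (fun s : ℝ => (1 - s/t)^2 * (1 + s/(2*t))) (nhdsWithin 0 (Ioi 0))
            (nhds ((1 - 0/t)^2 * (1 + 0/(2*t)))) := by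
          apply Tendsto.mono_left _ nhdsWithin_le_nhds
          exact (Continuous.tendsto (by continuity) 0)
        have hval : ((1:ℝ) - 0/t)^2 * (1 + 0/(2*t)) = 1 := by norm_num
        rw [hval] at hpoly
        have hK0 : sphK 0 t = 1 := by
          rw [show sphK 0 t = (1 - 0/t)^2 * (1 + 0/(2*t)) from if_pos ht0, hval]
        rw [hK0]
        refine hpoly.congr' ?_
        have hev : ∀ᶠ s in nhdsWithin (0:ℝ) (Ioi 0), s < t :=
          Filter.Eventually.filter_mono nhdsWithin_le_nhds
            (eventually_nhds_iff.2 ⟨Iio t, fun y hy => hy, isOpen_Iio, ht0⟩)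
        filter_upwards [hev] with s hs
        exact (if_pos hs).symm
    have hf0 : Tendsto f (nhdsWithin 0 (Ioi 0)) (nhds (f 0)) := by
      have := (hcont 0 self_mem_Ici).tendsto
      exact this.mono_left (nhdsWithin_mono 0 Ioi_subset_Ici_self)
    have hFf' : Tendsto F (nhdsWithin 0 (Ioi 0)) (nhds (f 0)) := by
      refine hf0.congr' ?_
      filter_upwards [self_mem_nhdsWithin] with s hs
      exact (hFf s hs).symm
    exact tendsto_nhds_unique hFf' hF0

end Repr

lemma quad_nonneg {p : ℕ} (K : Fin p → Fin p → ℝ)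
    (hK : ∀ c : Fin p → ℝ, 0 ≤ ∑ i, ∑ j, c i * c j * K i j)
    (u v : Fin p → ℝ) (A B Cc : ℝ) (hA : 0 ≤ A) (hB : 0 ≤ B) (hC : Cc^2 ≤ A*B) :
    0 ≤ ∑ i, ∑ j, K i j * (A * (u i * u j) + Cc * (u i * v j + v i * u j) + B * (v i * v j)) := by
  set S := ∑ i, ∑ j, K i j * (A * (u i * u j) + Cc * (u i * v j + v i * u j) + B * (v i * v j))
    with hS
  rcases hA.eq_or_lt with hA0 | hA0
  · have hCc0 : Cc = 0 := by
      have h1 : Cc^2 ≤ 0 := by rw [← hA0] at hC; linarith [hC]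
      have := sq_nonneg Cc
      nlinarith
    have : S = B * ∑ i, ∑ j, v i * v j * K i j := by
      rw [hS, Finset.mul_sum]
      refine Finset.sum_congr rfl fun i _ => ?_
      rw [Finset.mul_sum]
      refine Finset.sum_congr rfl fun j _ => ?_
      rw [← hA0, hCc0]; ring
    rw [this]
    exact mul_nonneg hB (hK v)
  · have key : A * S = (∑ i, ∑ j, (fun k => A * u k + Cc * v k) i * (fun k => A * u k + Cc * v k) j * K i j)
        + (A*B - Cc^2) * ∑ i, ∑ j, v i * v j * K i j := by
      rw [hS, Finset.mul_sum, Finset.mul_sum, ← Finset.sum_add_distrib]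
      refine Finset.sum_congr rfl fun i _ => ?_
      rw [Finset.mul_sum, Finset.mul_sum, ← Finset.sum_add_distrib]
      refine Finset.sum_congr rfl fun j _ => ?_
      simp only
      ring
    have h1 := hK (fun k => A * u k + Cc * v k)
    have h2 := hK v
    have hAS : 0 ≤ A * S := by
      rw [key]
      have : 0 ≤ (A*B - Cc^2) * ∑ i, ∑ j, v i * v j * K i j :=
        mul_nonneg (by linarith) h2
      linarith
    nlinarith

end Aux

/-- General sufficient condition for positive definiteness of a bivariate model in `ℝ³`. -/
theorem bivariate_sufficient_R3
    (σ1 σ2 ρ : ℝ) (hσ1 : 0 < σ1) (hσ2 : 0 < σ2) (hρ : ρ ∈ Icc (-1 : ℝ) 1)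
    (ψ11 ψ22 ψ12 : ℝ → ℝ)
    (hcont11 : ContinuousOn ψ11 (Ici 0)) (hcont22 : ContinuousOn ψ22 (Ici 0))
    (hcont12 : ContinuousOn ψ12 (Ici 0))
    (h011 : ψ11 0 = 1) (h022 : ψ22 0 = 1) (h012 : ψ12 0 = 1)
    (hC11 : ContDiffOn ℝ 3 ψ11 (Ioi 0)) (hC22 : ContDiffOn ℝ 3 ψ22 (Ioi 0))
    (hC12 : ContDiffOn ℝ 3 ψ12 (Ioi 0))
    (hconv11 : ∀ r > (0 : ℝ), 0 ≤ deriv (deriv ψ11) r - r * deriv (deriv (deriv ψ11)) r)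
    (hconv22 : ∀ r > (0 : ℝ), 0 ≤ deriv (deriv ψ22) r - r * deriv (deriv (deriv ψ22)) r)
    (hlim11 : Tendsto ψ11 atTop (nhds 0)) (hlim22 : Tendsto ψ22 atTop (nhds 0))
    (hlim12 : Tendsto ψ12 atTop (nhds 0))
    (hlim11' : Tendsto (fun r => r * deriv ψ11 r) atTop (nhds 0))
    (hlim22' : Tendsto (fun r => r * deriv ψ22 r) atTop (nhds 0))
    (hlim12' : Tendsto (fun r => r * deriv ψ12 r) atTop (nhds 0))
    (hlim11'' : Tendsto (fun r => r ^ 2 * deriv (deriv ψ11) r) atTop (nhds 0))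
    (hlim22'' : Tendsto (fun r => r ^ 2 * deriv (deriv ψ22) r) atTop (nhds 0))
    (hlim12'' : Tendsto (fun r => r ^ 2 * deriv (deriv ψ12) r) atTop (nhds 0))
    (hint11 : IntegrableOn
      (fun r => r * deriv (deriv ψ11) r - r ^ 2 * deriv (deriv (deriv ψ11)) r) (Ioi 0))
    (hint22 : IntegrableOn
      (fun r => r * deriv (deriv ψ22) r - r ^ 2 * deriv (deriv (deriv ψ22)) r) (Ioi 0))
    (hint12 : IntegrableOn
      (fun r => r * deriv (deriv ψ12) r - r ^ 2 * deriv (deriv (deriv ψ12)) r) (Ioi 0))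
    (hineq : ∀ r > (0 : ℝ),
      ρ ^ 2 * (deriv (deriv ψ12) r - r * deriv (deriv (deriv ψ12)) r) ^ 2 ≤
        (deriv (deriv ψ11) r - r * deriv (deriv (deriv ψ11)) r) *
        (deriv (deriv ψ22) r - r * deriv (deriv (deriv ψ22)) r)) :
    PosDefIn 3 (fun r =>
      !![σ1 ^ 2 * ψ11 r, ρ * σ1 * σ2 * ψ12 r;
         ρ * σ1 * σ2 * ψ12 r, σ2 ^ 2 * ψ22 r]) := by
  intro p x a
  set u : Fin p → ℝ := fun i => a i 0 with hu
  set v : Fin p → ℝ := fun i => a i 1 with hv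
  have h11 : ∀ i j : Fin p, ψ11 ‖x i - x j‖
      = ∫ t in Ioi (0:ℝ), wgt ψ11 t * sphK ‖x i - x j‖ t := fun i j =>
    repr_all ψ11 hcont11 hC11 hlim11 hlim11' hlim11'' hint11 (norm_nonneg _)
  have h22 : ∀ i j : Fin p, ψ22 ‖x i - x j‖
      = ∫ t in Ioi (0:ℝ), wgt ψ22 t * sphK ‖x i - x j‖ t := fun i j =>
    repr_all ψ22 hcont22 hC22 hlim22 hlim22' hlim22'' hint22 (norm_nonneg _)
  have h12 : ∀ i j : Fin p, ψ12 ‖x i - x j‖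
      = ∫ t in Ioi (0:ℝ), wgt ψ12 t * sphK ‖x i - x j‖ t := fun i j =>
    repr_all ψ12 hcont12 hC12 hlim12 hlim12' hlim12'' hint12 (norm_nonneg _)
  have i11 : ∀ i j : Fin p,
      IntegrableOn (fun t => wgt ψ11 t * sphK ‖x i - x j‖ t) (Ioi 0) := fun i j =>
    wgt_sphK_integrableOn ψ11 hint11 (norm_nonneg _) le_rfl
  have i22 : ∀ i j : Fin p,
      IntegrableOn (fun t => wgt ψ22 t * sphK ‖x i - x j‖ t) (Ioi 0) := fun i j =>
    wgt_sphK_integrableOn ψ22 hint22 (norm_nonneg _) le_rfl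
  have i12 : ∀ i j : Fin p,
      IntegrableOn (fun t => wgt ψ12 t * sphK ‖x i - x j‖ t) (Ioi 0) := fun i j =>
    wgt_sphK_integrableOn ψ12 hint12 (norm_nonneg _) le_rfl
  set G : Fin p → Fin p → ℝ → ℝ := fun i j t =>
    (σ1^2 * (u i * u j)) * (wgt ψ11 t * sphK ‖x i - x j‖ t)
    + (ρ*σ1*σ2 * (u i * v j + v i * u j)) * (wgt ψ12 t * sphK ‖x i - x j‖ t)
    + (σ2^2 * (v i * v j)) * (wgt ψ22 t * sphK ‖x i - x j‖ t) with hGdef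
  have hGint : ∀ i j : Fin p, IntegrableOn (G i j) (Ioi 0) := fun i j =>
    (((i11 i j).const_mul _).add ((i12 i j).const_mul _)).add ((i22 i j).const_mul _)
  have key : ∀ i j : Fin p,
      a i ⬝ᵥ (!![σ1 ^ 2 * ψ11 ‖x i - x j‖, ρ * σ1 * σ2 * ψ12 ‖x i - x j‖;
         ρ * σ1 * σ2 * ψ12 ‖x i - x j‖, σ2 ^ 2 * ψ22 ‖x i - x j‖]).mulVec (a j)
      = ∫ t in Ioi (0:ℝ), G i j t := by
    intro i j
    have expand : a i ⬝ᵥ (!![σ1 ^ 2 * ψ11 ‖x i - x j‖, ρ * σ1 * σ2 * ψ12 ‖x i - x j‖;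
         ρ * σ1 * σ2 * ψ12 ‖x i - x j‖, σ2 ^ 2 * ψ22 ‖x i - x j‖]).mulVec (a j)
        = (σ1^2 * (u i * u j)) * ψ11 ‖x i - x j‖
          + (ρ*σ1*σ2 * (u i * v j + v i * u j)) * ψ12 ‖x i - x j‖
          + (σ2^2 * (v i * v j)) * ψ22 ‖x i - x j‖ := by
      simp [Matrix.mulVec, dotProduct, Fin.sum_univ_two, Matrix.vecHead, Matrix.vecTail, hu, hv]
      ring
    have hf12 : Integrable (fun t => (σ1^2 * (u i * u j)) * (wgt ψ11 t * sphK ‖x i - x j‖ t)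
        + (ρ*σ1*σ2 * (u i * v j + v i * u j)) * (wgt ψ12 t * sphK ‖x i - x j‖ t))
        (volume.restrict (Ioi 0)) := by
      exact ((i11 i j).const_mul _).add ((i12 i j).const_mul _)
    rw [expand, h11 i j, h12 i j, h22 i j,
      ← MeasureTheory.integral_const_mul, ← MeasureTheory.integral_const_mul,
      ← MeasureTheory.integral_const_mul,
      ← integral_add ((i11 i j).const_mul _) ((i12 i j).const_mul _),
      ← integral_add hf12 ((i22 i j).const_mul _)]
  have step1 : ∑ i : Fin p, ∑ j : Fin p,
      a i ⬝ᵥ (!![σ1 ^ 2 * ψ11 ‖x i - x j‖, ρ * σ1 * σ2 * ψ12 ‖x i - x j‖;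
         ρ * σ1 * σ2 * ψ12 ‖x i - x j‖, σ2 ^ 2 * ψ22 ‖x i - x j‖]).mulVec (a j)
      = ∫ t in Ioi (0:ℝ), ∑ i : Fin p, ∑ j : Fin p, G i j t := by
    rw [integral_finset_sum _ (fun i _ => integrable_finset_sum _ (fun j _ => hGint i j))]
    refine Finset.sum_congr rfl fun i _ => ?_
    rw [integral_finset_sum _ (fun j _ => hGint i j)]
    exact Finset.sum_congr rfl fun j _ => key i j
  show (0:ℝ) ≤ ∑ i : Fin p, ∑ j : Fin p,
      a i ⬝ᵥ (!![σ1 ^ 2 * ψ11 ‖x i - x j‖, ρ * σ1 * σ2 * ψ12 ‖x i - x j‖;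
         ρ * σ1 * σ2 * ψ12 ‖x i - x j‖, σ2 ^ 2 * ψ22 ‖x i - x j‖]).mulVec (a j)
  rw [step1]
  apply setIntegral_nonneg measurableSet_Ioi
  intro t ht
  rw [mem_Ioi] at ht
  -- pointwise nonnegativity of the quadratic form
  set g11 := deriv (deriv ψ11) t - t * deriv (deriv (deriv ψ11)) t with hg11
  set g22 := deriv (deriv ψ22) t - t * deriv (deriv (deriv ψ22)) t with hg22
  set g12 := deriv (deriv ψ12) t - t * deriv (deriv (deriv ψ12)) t with hg12
  have w11 : wgt ψ11 t = t/3 * g11 := by rw [hg11]; unfold wgt; ring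
  have w22 : wgt ψ22 t = t/3 * g22 := by rw [hg22]; unfold wgt; ring
  have w12 : wgt ψ12 t = t/3 * g12 := by rw [hg12]; unfold wgt; ring
  have hA : 0 ≤ σ1^2 * wgt ψ11 t := by
    rw [w11]
    have := hconv11 t ht
    positivity
  have hB : 0 ≤ σ2^2 * wgt ψ22 t := by
    rw [w22]
    have := hconv22 t ht
    positivity
  have hC : (ρ*σ1*σ2 * wgt ψ12 t)^2 ≤ (σ1^2 * wgt ψ11 t) * (σ2^2 * wgt ψ22 t) := by
    rw [w11, w22, w12]
    have h := hineq t ht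
    rw [← hg11, ← hg22, ← hg12] at h
    nlinarith [mul_le_mul_of_nonneg_left h (show (0:ℝ) ≤ (σ1*σ2*(t/3))^2 by positivity),
      sq_nonneg (σ1*σ2*(t/3))]
  have hsum : ∑ i : Fin p, ∑ j : Fin p, G i j t
      = ∑ i : Fin p, ∑ j : Fin p, (fun i j => sphK ‖x i - x j‖ t) i j *
        ((σ1^2 * wgt ψ11 t) * (u i * u j)
          + (ρ*σ1*σ2 * wgt ψ12 t) * (u i * v j + v i * u j)
          + (σ2^2 * wgt ψ22 t) * (v i * v j)) := by
    refine Finset.sum_congr rfl fun i _ => Finset.sum_congr rfl fun j _ => ?_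
    rw [hGdef]
    simp only
    ring
  rw [hsum]
  exact quad_nonneg (fun i j => sphK ‖x i - x j‖ t)
    (fun c => sphK_posdef t ht x c) u v _ _ _ hA hB hC
end
end

section
/- Let ψ : [0,∞) → ℝ be continuous with ψ(0) = 1, twice continuously differentiable on (0,∞), and suppose that ψ''(r) ≥ 0 for all r > 0, ψ(r) → 0 and r·ψ'(r) → 0 as r → ∞, and that lim_{r→0+} r·ψ'(r) exists and is finite. Then the function u ↦ u·ψ''(u) is (absolutely) integrable on (0,∞), i.e. ∫_0^∞ |u·ψ''(u)| du < ∞. -/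
open Set Filter MeasureTheory

noncomputable section

/-- If `ψ` is `C²` on `(0,∞)` with `ψ'' ≥ 0`, `ψ(r) → 0` and `r ψ'(r) → 0` at infinity,
and `r ψ'(r)` has a finite limit at `0+`, then `u ↦ u ψ''(u)` is absolutely integrable
on `(0,∞)`. -/
theorem integrable_u_mul_second_deriv
    (ψ : ℝ → ℝ)
    (hcont : ContinuousOn ψ (Ici 0)) (h0 : ψ 0 = 1)
    (hC2 : ContDiffOn ℝ 2 ψ (Ioi 0))
    (hconv : ∀ r > (0 : ℝ), 0 ≤ deriv (deriv ψ) r)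
    (hlim : Tendsto ψ atTop (nhds 0))
    (hlim' : Tendsto (fun r => r * deriv ψ r) atTop (nhds 0))
    (hlim0 : ∃ L : ℝ, Tendsto (fun r => r * deriv ψ r) (nhdsWithin 0 (Ioi 0)) (nhds L)) :
    IntegrableOn (fun u => u * deriv (deriv ψ) u) (Ioi 0) := by
  obtain ⟨L, hL⟩ := hlim0
  set f : ℝ → ℝ := fun u => u * deriv (deriv ψ) u with hf
  set g : ℝ → ℝ := fun u => u * deriv ψ u - ψ u with hg
  have hC1' : ContDiffOn ℝ 1 (deriv ψ) (Ioi 0) :=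
    hC2.deriv_of_isOpen isOpen_Ioi (by norm_num)
  have hfc : ContinuousOn f (Ioi 0) :=
    continuousOn_id.mul (hC1'.continuousOn_deriv_of_isOpen isOpen_Ioi le_rfl)
  have hgd : ∀ x ∈ Ioi (0:ℝ), HasDerivAt g (f x) x := by
    intro x hx
    have hxn : Ioi (0:ℝ) ∈ nhds x := Ioi_mem_nhds hx
    have h1 : HasDerivAt ψ (deriv ψ x) x :=
      (((hC2.differentiableOn two_ne_zero).differentiableAt hxn)).hasDerivAt
    have h2 : HasDerivAt (deriv ψ) (deriv (deriv ψ) x) x :=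
      (((hC1'.differentiableOn one_ne_zero).differentiableAt hxn)).hasDerivAt
    have h3 : HasDerivAt (fun y => y * deriv ψ y - ψ y)
        (1 * deriv ψ x + x * deriv (deriv ψ) x - deriv ψ x) x :=
      ((hasDerivAt_id x).mul h2).sub h1
    convert h3 using 1
    simp only [hf, id]
    ring
  -- FTC on compact subintervals of (0,∞)
  have key : ∀ a b : ℝ, 0 < a → a ≤ b → (∫ x in a..b, f x) = g b - g a := by
    intro a b ha hab
    have hsub : uIcc a b ⊆ Ioi 0 := by
      rw [uIcc_of_le hab]
      exact fun x hx => lt_of_lt_of_le ha hx.1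
    exact intervalIntegral.integral_eq_sub_of_hasDerivAt
      (fun x hx => hgd x (hsub hx)) ((hfc.mono hsub).intervalIntegrable)
  have hnorm : ∀ a b : ℝ, 0 < a → a ≤ b →
      (∫ x in Ioc a b, ‖f x‖) = g b - g a := by
    intro a b ha hab
    rw [← key a b ha hab, intervalIntegral.integral_of_le hab]
    refine setIntegral_congr_fun measurableSet_Ioc (fun x hx => ?_)
    have hx0 : 0 < x := lt_of_lt_of_le ha hx.1.le
    exact Real.norm_of_nonneg (mul_nonneg hx0.le (hconv x hx0))
  -- limit of g at 0⁺
  have hψ0 : Tendsto ψ (nhdsWithin 0 (Ioi 0)) (nhds 1) := by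
    have := (hcont 0 self_mem_Ici).tendsto
    rw [h0] at this
    exact this.mono_left (nhdsWithin_mono 0 Ioi_subset_Ici_self)
  have hg0 : Tendsto g (nhdsWithin 0 (Ioi 0)) (nhds (L - 1)) := hL.sub hψ0
  -- integrability on (0, 1]
  have haseq : Tendsto (fun n : ℕ => (1:ℝ) / (n + 2)) atTop (nhdsWithin 0 (Ioi 0)) := by
    apply tendsto_nhdsWithin_of_tendsto_nhds_of_eventually_within
    · exact tendsto_const_nhds.div_atTop
        (tendsto_atTop_add_const_right atTop 2 tendsto_natCast_atTop_atTop)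
    · exact Eventually.of_forall fun n => mem_Ioi.mpr (by positivity)
  have h1 : IntegrableOn f (Ioc 0 1) := by
    have hbd : Tendsto (fun n : ℕ => ∫ x in Ioc ((1:ℝ)/(n+2)) 1, ‖f x‖) atTop
        (nhds (g 1 - (L - 1))) := by
      have : ∀ n : ℕ, (∫ x in Ioc ((1:ℝ)/(n+2)) 1, ‖f x‖) = g 1 - g ((1:ℝ)/(n+2)) := by
        intro n
        refine hnorm _ _ (by positivity) ?_
        rw [div_le_one (by positivity)]
        linarith [Nat.cast_nonneg (α := ℝ) n]
      simp_rw [this]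
      exact tendsto_const_nhds.sub (hg0.comp haseq)
    obtain ⟨I, hI⟩ := hbd.isBoundedUnder_le
    refine integrableOn_Ioc_of_intervalIntegral_norm_bounded_left
      (fun n => ?_) (haseq.mono_right nhdsWithin_le_nhds) hI
    refine ((hfc.mono ?_).integrableOn_Icc).mono_set Ioc_subset_Icc_self
    exact fun x hx => lt_of_lt_of_le (by positivity) hx.1
  -- integrability on (1, ∞)
  have h2 : IntegrableOn f (Ioi 1) := by
    have hgtop : Tendsto g atTop (nhds 0) := by
      have := hlim'.sub hlim
      simpa using this
    have hbd : Tendsto (fun n : ℕ => ∫ x in Ioc 1 ((n:ℝ)+1), ‖f x‖) atTop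
        (nhds (0 - g 1)) := by
      have : ∀ n : ℕ, (∫ x in Ioc (1:ℝ) ((n:ℝ)+1), ‖f x‖) = g ((n:ℝ)+1) - g 1 := by
        intro n
        exact hnorm _ _ one_pos (by linarith [Nat.cast_nonneg (α := ℝ) n])
      simp_rw [this]
      refine Tendsto.sub ?_ tendsto_const_nhds
      exact hgtop.comp (tendsto_atTop_add_const_right atTop 1 tendsto_natCast_atTop_atTop)
    obtain ⟨I, hI⟩ := hbd.isBoundedUnder_le
    have hI' : ∀ᶠ n : ℕ in atTop, (∫ x in (1:ℝ)..((n:ℝ)+1), ‖f x‖) ≤ I := by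
      filter_upwards [hI] with n hn
      rwa [intervalIntegral.integral_of_le (by linarith [Nat.cast_nonneg (α := ℝ) n])]
    refine integrableOn_Ioi_of_intervalIntegral_norm_bounded I 1
      (fun n => ?_) (tendsto_atTop_add_const_right atTop 1 tendsto_natCast_atTop_atTop) hI'
    refine ((hfc.mono ?_).integrableOn_Icc).mono_set Ioc_subset_Icc_self
    exact fun x hx => lt_of_lt_of_le one_pos hx.1
  have : Ioc (0:ℝ) 1 ∪ Ioi 1 = Ioi 0 := Ioc_union_Ioi_eq_Ioi zero_le_one
  rw [← this]
  exact h1.union h2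
end
end

section
/- Let ψ : [0,∞) → ℝ be continuous with ψ(0) = 1, three times continuously differentiable on (0,∞), and suppose that ψ''(r) ≥ r·ψ'''(r) for all r > 0, ψ(r) → 0, r·ψ'(r) → 0 and r²·ψ''(r) → 0 as r → ∞, and that lim_{r→0+} r·ψ'(r) and lim_{r→0+} r²·ψ''(r) exist and are finite. Then the function u ↦ u·ψ''(u) − u²·ψ'''(u) is (absolutely) integrable on (0,∞), i.e. ∫_0^∞ |u·ψ''(u) − u²·ψ'''(u)| du < ∞. -/
open Set Filter MeasureTheory

noncomputable section

/-- If `ψ` is `C³` on `(0,∞)` with `ψ''(r) ≥ r ψ'''(r)`, `ψ(r) → 0`, `r ψ'(r) → 0` and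
`r² ψ''(r) → 0` at infinity, and `r ψ'(r)` and `r² ψ''(r)` have finite limits at `0+`,
then `u ↦ u ψ''(u) - u² ψ'''(u)` is absolutely integrable on `(0,∞)`. -/
theorem integrable_u_mul_second_deriv_sub_sq_third_deriv
    (ψ : ℝ → ℝ)
    (hcont : ContinuousOn ψ (Ici 0)) (h0 : ψ 0 = 1)
    (hC3 : ContDiffOn ℝ 3 ψ (Ioi 0))
    (hconv : ∀ r > (0 : ℝ), r * deriv (deriv (deriv ψ)) r ≤ deriv (deriv ψ) r)
    (hlim : Tendsto ψ atTop (nhds 0))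
    (hlim' : Tendsto (fun r => r * deriv ψ r) atTop (nhds 0))
    (hlim'' : Tendsto (fun r => r ^ 2 * deriv (deriv ψ) r) atTop (nhds 0))
    (hlim0 : ∃ L : ℝ, Tendsto (fun r => r * deriv ψ r) (nhdsWithin 0 (Ioi 0)) (nhds L))
    (hlim0' : ∃ L : ℝ,
      Tendsto (fun r => r ^ 2 * deriv (deriv ψ) r) (nhdsWithin 0 (Ioi 0)) (nhds L)) :
    IntegrableOn (fun u => u * deriv (deriv ψ) u - u ^ 2 * deriv (deriv (deriv ψ)) u)
      (Ioi 0) := by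
  obtain ⟨L, hL⟩ := hlim0
  obtain ⟨L', hL'⟩ := hlim0'
  -- the antiderivative
  set F : ℝ → ℝ := fun u =>
    if u = 0 then 3 * L - L' - 3 else 3 * (u * deriv ψ u) - u ^ 2 * deriv (deriv ψ) u - 3 * ψ u
    with hF
  have hC2 : ContDiffOn ℝ 2 (deriv ψ) (Ioi 0) :=
    hC3.deriv_of_isOpen isOpen_Ioi (by norm_num)
  have hC1 : ContDiffOn ℝ 1 (deriv (deriv ψ)) (Ioi 0) :=
    hC2.deriv_of_isOpen isOpen_Ioi (by norm_num)
  have hd1 : ∀ x ∈ Ioi (0:ℝ), HasDerivAt ψ (deriv ψ x) x := fun x hx =>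
    ((hC3.differentiableOn (by norm_num)).differentiableAt
      (isOpen_Ioi.mem_nhds hx)).hasDerivAt
  have hd2 : ∀ x ∈ Ioi (0:ℝ), HasDerivAt (deriv ψ) (deriv (deriv ψ) x) x := fun x hx =>
    ((hC2.differentiableOn (by norm_num)).differentiableAt
      (isOpen_Ioi.mem_nhds hx)).hasDerivAt
  have hd3 : ∀ x ∈ Ioi (0:ℝ), HasDerivAt (deriv (deriv ψ)) (deriv (deriv (deriv ψ)) x) x :=
    fun x hx =>
    ((hC1.differentiableOn (by norm_num)).differentiableAt
      (isOpen_Ioi.mem_nhds hx)).hasDerivAt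
  have hderiv : ∀ x ∈ Ioi (0:ℝ),
      HasDerivAt F (x * deriv (deriv ψ) x - x ^ 2 * deriv (deriv (deriv ψ)) x) x := by
    intro x hx
    have hxne : ∀ᶠ y in nhds x, F y =
        3 * (y * deriv ψ y) - y ^ 2 * deriv (deriv ψ) y - 3 * ψ y := by
      filter_upwards [isOpen_Ioi.mem_nhds hx] with y hy
      simp [hF, ne_of_gt (show (0:ℝ) < y from hy)]
    have h1 := ((hasDerivAt_id x).mul (hd2 x hx)).const_mul 3
    have h2 := ((hasDerivAt_pow 2 x)).mul (hd3 x hx)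
    have h3 := (hd1 x hx).const_mul 3
    have H := (h1.sub h2).sub h3
    refine HasDerivAt.congr_of_eventuallyEq ?_ hxne
    convert H using 1
    · funext y
      simp only [Pi.sub_apply, Pi.mul_apply, id_eq]
    simp only [id_eq, Nat.cast_ofNat, show (2:ℕ) - 1 = 1 from rfl, pow_one]
    ring
  have g'pos : ∀ x ∈ Ioi (0:ℝ),
      0 ≤ x * deriv (deriv ψ) x - x ^ 2 * deriv (deriv (deriv ψ)) x := by
    intro x hx
    have hx0 : (0:ℝ) < x := hx
    have := hconv x hx0
    nlinarith
  have hFtop : Tendsto F atTop (nhds 0) := by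
    have : Tendsto (fun u => 3 * (u * deriv ψ u) - u ^ 2 * deriv (deriv ψ) u - 3 * ψ u)
        atTop (nhds (3 * 0 - 0 - 3 * 0)) :=
      ((hlim'.const_mul 3).sub hlim'').sub (hlim.const_mul 3)
    rw [show (0:ℝ) = 3 * 0 - 0 - 3 * 0 by ring]
    refine this.congr' ?_
    filter_upwards [eventually_gt_atTop (0:ℝ)] with y hy
    simp [hF, ne_of_gt hy]
  have hFcont : ContinuousWithinAt F (Ici 0) 0 := by
    have hψ0 : Tendsto ψ (nhdsWithin 0 (Ioi 0)) (nhds 1) := by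
      have := (hcont 0 (self_mem_Ici)).tendsto
      rw [h0] at this
      exact this.mono_left (nhdsWithin_mono 0 Ioi_subset_Ici_self)
    have hIoi : Tendsto F (nhdsWithin 0 (Ioi 0)) (nhds (3 * L - L' - 3)) := by
      have : Tendsto (fun u => 3 * (u * deriv ψ u) - u ^ 2 * deriv (deriv ψ) u - 3 * ψ u)
          (nhdsWithin 0 (Ioi 0)) (nhds (3 * L - L' - 3 * 1)) :=
        ((hL.const_mul 3).sub hL').sub (hψ0.const_mul 3)
      rw [show 3 * L - L' - 3 = 3 * L - L' - 3 * 1 by ring]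
      refine this.congr' ?_
      filter_upwards [self_mem_nhdsWithin] with y hy
      simp [hF, ne_of_gt (show (0:ℝ) < y from hy)]
    have hF0 : F 0 = 3 * L - L' - 3 := by simp [hF]
    unfold ContinuousWithinAt
    rw [hF0, show (Ici (0:ℝ)) = insert 0 (Ioi 0) by simp, nhdsWithin_insert,
      tendsto_sup]
    exact ⟨hF0 ▸ tendsto_pure_nhds F 0, hIoi⟩
  exact integrableOn_Ioi_deriv_of_nonneg hFcont hderiv g'pos hFtop
end
end

section
/- Let ψ : (0,∞) → ℝ be three times continuously differentiable with ψ(u) → 0, u·ψ'(u) → 0 and u²·ψ''(u) → 0 as u → ∞, and suppose u ↦ u·ψ''(u) − u²·ψ'''(u) is integrable on (0,∞). Then for every r > 0 it holds that ∫_r^∞ (1 − 3r/(2u) + r³/(2u³))·(u·ψ''(u) − u²·ψ'''(u)) du = 3·ψ(r). -/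
open Set Filter MeasureTheory

noncomputable section

/-- For a function `ψ` that is `C³` on `(0,∞)` with `ψ(u) → 0`, `u ψ'(u) → 0` and
`u² ψ''(u) → 0` at infinity and `u ψ''(u) - u² ψ'''(u)` integrable, one has
`∫_r^∞ (1 - 3r/(2u) + r³/(2u³)) (u ψ''(u) - u² ψ'''(u)) du = 3 ψ(r)` for all `r > 0`. -/
theorem integral_third_deriv_representation
    (ψ : ℝ → ℝ)
    (hC3 : ContDiffOn ℝ 3 ψ (Ioi 0))
    (hlim : Tendsto ψ atTop (nhds 0))
    (hlim' : Tendsto (fun u => u * deriv ψ u) atTop (nhds 0))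
    (hlim'' : Tendsto (fun u => u ^ 2 * deriv (deriv ψ) u) atTop (nhds 0))
    (hint : IntegrableOn (fun u => u * deriv (deriv ψ) u - u ^ 2 * deriv (deriv (deriv ψ)) u)
      (Ioi 0)) :
    ∀ r > (0 : ℝ),
      (∫ u in Ioi r, (1 - 3 * r / (2 * u) + r ^ 3 / (2 * u ^ 3)) *
        (u * deriv (deriv ψ) u - u ^ 2 * deriv (deriv (deriv ψ)) u)) = 3 * ψ r := by
  -- C² and C¹ regularity of the derivatives on the open set
  have hC2 : ContDiffOn ℝ 2 (deriv ψ) (Ioi 0) :=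
    hC3.deriv_of_isOpen isOpen_Ioi (by norm_num)
  have hC1 : ContDiffOn ℝ 1 (deriv (deriv ψ)) (Ioi 0) :=
    hC2.deriv_of_isOpen isOpen_Ioi (by norm_num)
  have hd1 : ∀ u ∈ Ioi (0:ℝ), HasDerivAt ψ (deriv ψ u) u := fun u hu =>
    ((hC3.differentiableOn (by norm_num)).differentiableAt (isOpen_Ioi.mem_nhds hu)).hasDerivAt
  have hd2 : ∀ u ∈ Ioi (0:ℝ), HasDerivAt (deriv ψ) (deriv (deriv ψ) u) u := fun u hu =>
    ((hC2.differentiableOn (by norm_num)).differentiableAt (isOpen_Ioi.mem_nhds hu)).hasDerivAt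
  have hd3 : ∀ u ∈ Ioi (0:ℝ), HasDerivAt (deriv (deriv ψ)) (deriv (deriv (deriv ψ)) u) u :=
    fun u hu =>
    ((hC1.differentiableOn (by norm_num)).differentiableAt (isOpen_Ioi.mem_nhds hu)).hasDerivAt
  -- limits at infinity
  have hinv : Tendsto (fun u : ℝ => u⁻¹) atTop (nhds 0) := tendsto_inv_atTop_zero
  have t1 : Tendsto (fun u => deriv ψ u) atTop (nhds 0) := by
    have h := hlim'.mul hinv
    rw [mul_zero] at h
    apply h.congr'
    filter_upwards [eventually_gt_atTop (0:ℝ)] with u hu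
    field_simp
  have t2a : Tendsto (fun u => u * deriv (deriv ψ) u) atTop (nhds 0) := by
    have h := hlim''.mul hinv
    rw [mul_zero] at h
    apply h.congr'
    filter_upwards [eventually_gt_atTop (0:ℝ)] with u hu
    field_simp
  have t2c : Tendsto (fun u => u⁻¹ * deriv (deriv ψ) u) atTop (nhds 0) := by
    have h := (t2a.mul hinv).mul hinv
    simp only [mul_zero] at h
    apply h.congr'
    filter_upwards [eventually_gt_atTop (0:ℝ)] with u hu
    field_simp
  intro r hr
  -- the antiderivative
  set F : ℝ → ℝ := fun u => -3 * ψ u + 3 * (u - r) * deriv ψ u -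
    (u ^ 2 - 3 * r / 2 * u + r ^ 3 / 2 * u⁻¹) * deriv (deriv ψ) u with hFdef
  have hFr : F r = -3 * ψ r := by
    have : (r ^ 2 - 3 * r / 2 * r + r ^ 3 / 2 * r⁻¹) = 0 := by
      field_simp; ring
    simp [hFdef, this]
  -- derivative of F
  have hFderiv : ∀ u ∈ Ioi r, HasDerivAt F
      ((1 - 3 * r / (2 * u) + r ^ 3 / (2 * u ^ 3)) *
        (u * deriv (deriv ψ) u - u ^ 2 * deriv (deriv (deriv ψ)) u)) u := by
    intro u hu'
    have hu : (0:ℝ) < u := hr.trans hu'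
    have h1 := hd1 u hu
    have h2 := hd2 u hu
    have h3 := hd3 u hu
    have hA : HasDerivAt (fun x : ℝ => 3 * (x - r)) 3 u := by
      simpa using ((hasDerivAt_id u).sub_const r).const_mul 3
    have hc : HasDerivAt (fun x : ℝ => x ^ 2 - 3 * r / 2 * x + r ^ 3 / 2 * x⁻¹)
        (2 * u - 3 * r / 2 + r ^ 3 / 2 * (-(u ^ 2)⁻¹)) u := by
      have h := ((hasDerivAt_pow 2 u).sub ((hasDerivAt_id u).const_mul (3 * r / 2))).add
        ((hasDerivAt_inv hu.ne').const_mul (r ^ 3 / 2))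
      exact h.congr_deriv (by simp)
    have hF := (((h1.const_mul (-3)).add (hA.mul h2)).sub (hc.mul h3))
    refine hF.congr_deriv ?_
    field_simp
    ring
  -- limit of F at infinity
  have hFtop : Tendsto F atTop (nhds 0) := by
    have h := ((hlim.const_mul (-3)).add
      ((hlim'.const_mul 3).sub (t1.const_mul (3 * r)))).sub
      ((hlim''.sub (t2a.const_mul (3 * r / 2))).add (t2c.const_mul (r ^ 3 / 2)))
    simp only [mul_zero, add_zero, sub_zero, zero_sub, neg_zero, sub_self, zero_add] at h
    apply h.congr
    intro u
    simp only [hFdef]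
    ring
  -- integrability of the integrand
  have hg : IntegrableOn
      (fun u => u * deriv (deriv ψ) u - u ^ 2 * deriv (deriv (deriv ψ)) u) (Ioi r) :=
    hint.mono_set (Ioi_subset_Ioi hr.le)
  have hw_cont : ContinuousOn (fun u : ℝ => 1 - 3 * r / (2 * u) + r ^ 3 / (2 * u ^ 3)) (Ioi r) := by
    apply ContinuousOn.add
    · apply continuousOn_const.sub
      exact continuousOn_const.div (continuousOn_const.mul continuousOn_id) fun x hx => by
        have : (0:ℝ) < x := hr.trans hx
        positivity
    · exact continuousOn_const.div (continuousOn_const.mul (continuousOn_pow 3)) fun x hx => by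
        have : (0:ℝ) < x := hr.trans hx
        positivity
  have hw_bound : ∀ x ∈ Ioi r, ‖(1 - 3 * r / (2 * x) + r ^ 3 / (2 * x ^ 3))‖ ≤ 3 := by
    intro x hx
    have hxr : r < x := hx
    have hx0 : (0:ℝ) < x := hr.trans hxr
    have ha0 : 0 < r / x := div_pos hr hx0
    have ha1 : r / x ≤ 1 := (div_le_one hx0).2 hxr.le
    have ha3 : (r / x) ^ 3 ≤ 1 := pow_le_one₀ ha0.le ha1
    have heq : 1 - 3 * r / (2 * x) + r ^ 3 / (2 * x ^ 3)
        = 1 - 3 / 2 * (r / x) + 1 / 2 * (r / x) ^ 3 := by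
      field_simp
    rw [heq, Real.norm_eq_abs, abs_le]
    constructor <;> nlinarith [pow_pos ha0 3]
  have hint_w : IntegrableOn (fun u => (1 - 3 * r / (2 * u) + r ^ 3 / (2 * u ^ 3)) *
      (u * deriv (deriv ψ) u - u ^ 2 * deriv (deriv (deriv ψ)) u)) (Ioi r) := by
    apply Integrable.bdd_mul (c := 3) hg
      (hw_cont.aestronglyMeasurable measurableSet_Ioi)
    exact (ae_restrict_iff' measurableSet_Ioi).2 (ae_of_all _ hw_bound)
  -- continuity of F at r from the right
  have hFcont : ContinuousWithinAt F (Ici r) r := by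
    have : ContinuousOn F (Ioi 0) := by
      apply ContinuousOn.sub
      · exact (continuousOn_const.mul hC3.continuousOn).add
          ((continuousOn_const.mul (continuousOn_id.sub continuousOn_const)).mul hC2.continuousOn)
      · apply ContinuousOn.mul _ hC1.continuousOn
        apply ContinuousOn.add
        · exact (continuousOn_pow 2).sub (continuousOn_const.mul continuousOn_id)
        · exact continuousOn_const.mul (continuousOn_inv₀.mono fun x hx => ne_of_gt hx)
    exact ((this.continuousAt (isOpen_Ioi.mem_nhds hr)).continuousWithinAt)
  have key := integral_Ioi_of_hasDerivAt_of_tendsto hFcont hFderiv hint_w hFtop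
  rw [key, hFr]
  ring

end
end
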